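/- Let K_{r,s} be the complete bipartite graph with parts of sizes r and s, where r, s ≥ 2, and let c be any proper coloring of K_{r,s}. Then every up-color dominating c-set of K_{r,s} has at least 2 elements, and there exists an up-color dominating c-set of K_{r,s} with at most max{r, s} elements. -/
import Mathlib

/-- `D` is an up-color dominating `c`-set of `G`. -/
def IsUCDomSet {V : Type*} (G : SimpleGraph V) (c : V → ℕ) (D : Finset V) : Prop :=
  (∀ v ∉ D, ∃ d ∈ D, G.Adj v d ∧ c v < c d) ∧ ∀ d ∈ D, 1 ≤ c d

lemma exists_ucdom {α β : Type*} [Fintype α] [Fintype β] [DecidableEq α] [DecidableEq β]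
    (c : α ⊕ β → ℕ)
    (B : ℕ) (hB : ∀ w : β, c (Sum.inr w) ≤ B)
    (v0 : β) (hv0 : c (Sum.inr v0) = B)
    (hc : ∀ u : α, c (Sum.inl u) ≠ B)
    (hA : ∃ u : α, B < c (Sum.inl u)) :
    ∃ D : Finset (α ⊕ β), IsUCDomSet (completeBipartiteGraph α β) c D ∧
      D.card ≤ Fintype.card α := by
  classical
  set D0 : Finset (α ⊕ β) :=
    (Finset.univ.filter (fun u : α => B < c (Sum.inl u))).image Sum.inl with hD0
  have hmemD0 : ∀ x, x ∈ D0 ↔ ∃ u : α, x = Sum.inl u ∧ B < c (Sum.inl u) := by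
    intro x
    simp only [hD0, Finset.mem_image, Finset.mem_filter, Finset.mem_univ, true_and]
    constructor
    · rintro ⟨u, hu, rfl⟩; exact ⟨u, rfl, hu⟩
    · rintro ⟨u, rfl, hu⟩; exact ⟨u, hu, rfl⟩
  obtain ⟨u0, hu0⟩ := hA
  by_cases h : ∃ u : α, c (Sum.inl u) < B
  · obtain ⟨u1, hu1⟩ := h
    refine ⟨insert (Sum.inr v0) D0, ⟨?_, ?_⟩, ?_⟩
    · intro v hv
      match v with
      | Sum.inr w =>
        refine ⟨Sum.inl u0, ?_, ?_, ?_⟩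
        · exact Finset.mem_insert.2 (Or.inr ((hmemD0 _).2 ⟨u0, rfl, hu0⟩))
        · simp
        · exact lt_of_le_of_lt (hB w) hu0
      | Sum.inl u =>
        refine ⟨Sum.inr v0, Finset.mem_insert_self _ _, by simp, ?_⟩
        rw [hv0]
        rcases lt_trichotomy (c (Sum.inl u)) B with h1 | h1 | h1
        · exact h1
        · exact absurd h1 (hc u)
        · exact absurd (Finset.mem_insert.2 (Or.inr ((hmemD0 _).2 ⟨u, rfl, h1⟩))) hv
    · intro d hd
      rcases Finset.mem_insert.1 hd with rfl | hd
      · rw [hv0]; omega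
      · obtain ⟨u, rfl, hu⟩ := (hmemD0 _).1 hd; omega
    · have h1 : D0.card ≤ Fintype.card α - 1 := by
        rw [hD0, Finset.card_image_of_injective _ Sum.inl_injective]
        have : (Finset.univ.filter (fun u : α => B < c (Sum.inl u))) ⊆
            Finset.univ.erase u1 := by
          intro u hu
          rw [Finset.mem_filter] at hu
          refine Finset.mem_erase.2 ⟨?_, Finset.mem_univ _⟩
          rintro rfl; omega
        calc _ ≤ (Finset.univ.erase u1).card := Finset.card_le_card this
        _ = Fintype.card α - 1 := by rw [Finset.card_erase_of_mem (Finset.mem_univ _), Finset.card_univ]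
      have h2 : 1 ≤ Fintype.card α := Fintype.card_pos_iff.2 ⟨u1⟩
      calc (insert (Sum.inr v0) D0).card ≤ D0.card + 1 := Finset.card_insert_le _ _
      _ ≤ Fintype.card α := by omega
  · push_neg at h
    have hall : ∀ u : α, B < c (Sum.inl u) := fun u =>
      lt_of_le_of_ne (h u) (fun e => hc u e.symm)
    refine ⟨D0, ⟨?_, ?_⟩, ?_⟩
    · intro v hv
      match v with
      | Sum.inr w =>
        exact ⟨Sum.inl u0, (hmemD0 _).2 ⟨u0, rfl, hu0⟩, by simp,
          lt_of_le_of_lt (hB w) hu0⟩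
      | Sum.inl u => exact absurd ((hmemD0 _).2 ⟨u, rfl, hall u⟩) hv
    · intro d hd; obtain ⟨u, rfl, hu⟩ := (hmemD0 _).1 hd; omega
    · rw [hD0, Finset.card_image_of_injective _ Sum.inl_injective]
      exact (Finset.card_filter_le _ _).trans (by simp)

theorem stmt_10 (r s : ℕ) (hr : 2 ≤ r) (hs : 2 ≤ s)
    (c : Fin r ⊕ Fin s → ℕ)
    (hc : ∀ ⦃u v⦄, (completeBipartiteGraph (Fin r) (Fin s)).Adj u v → c u ≠ c v) :
    (∀ D : Finset (Fin r ⊕ Fin s),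
        IsUCDomSet (completeBipartiteGraph (Fin r) (Fin s)) c D → 2 ≤ D.card) ∧
      (∃ D : Finset (Fin r ⊕ Fin s),
        IsUCDomSet (completeBipartiteGraph (Fin r) (Fin s)) c D ∧ D.card ≤ max r s) := by
  classical
  have hr0 : 0 < r := by omega
  have hs0 : 0 < s := by omega
  constructor
  · -- lower bound
    intro D hD
    by_contra hcard
    push_neg at hcard
    interval_cases hn : D.card
    · -- empty
      have hDe : D = ∅ := Finset.card_eq_zero.1 hn
      obtain ⟨d, hd, _, _⟩ := hD.1 (Sum.inl ⟨0, hr0⟩) (by simp [hDe])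
      simp [hDe] at hd
    · -- singleton
      obtain ⟨d, hDe⟩ := Finset.card_eq_one.1 hn
      match d with
      | Sum.inl u =>
        -- pick another left vertex
        have : Nontrivial (Fin r) := Fin.nontrivial_iff_two_le.mpr hr
        obtain ⟨u', hu'⟩ := exists_ne u
        have hnm : Sum.inl u' ∉ D := by
          simp only [hDe, Finset.mem_singleton]
          exact fun h => hu' (by injection h)
        obtain ⟨d', hd', hadj, _⟩ := hD.1 _ hnm
        rw [hDe, Finset.mem_singleton] at hd'
        subst hd'
        simp at hadj
      | Sum.inr v =>
        have : Nontrivial (Fin s) := Fin.nontrivial_iff_two_le.mpr hs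
        obtain ⟨v', hv'⟩ := exists_ne v
        have hnm : Sum.inr v' ∉ D := by
          simp only [hDe, Finset.mem_singleton]
          exact fun h => hv' (by injection h)
        obtain ⟨d', hd', hadj, _⟩ := hD.1 _ hnm
        rw [hDe, Finset.mem_singleton] at hd'
        subst hd'
        simp at hadj
  · -- upper bound
    -- max colors on each side
    obtain ⟨u0, -, hu0⟩ := Finset.exists_max_image (Finset.univ : Finset (Fin r))
      (fun u => c (Sum.inl u)) ⟨⟨0, hr0⟩, Finset.mem_univ _⟩
    obtain ⟨v0, -, hv0⟩ := Finset.exists_max_image (Finset.univ : Finset (Fin s))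
      (fun v => c (Sum.inr v)) ⟨⟨0, hs0⟩, Finset.mem_univ _⟩
    set A := c (Sum.inl u0)
    set B := c (Sum.inr v0)
    have hAB : A ≠ B := hc (by simp : (completeBipartiteGraph (Fin r) (Fin s)).Adj (Sum.inl u0) (Sum.inr v0))
    rcases lt_or_gt_of_ne hAB with hlt | hgt
    · -- B > A : left side is "small" side; apply lemma swapped
      obtain ⟨D', hD', hcard⟩ := exists_ucdom (α := Fin s) (β := Fin r)
        (c ∘ (Equiv.sumComm (Fin s) (Fin r)))
        A (fun u => hu0 u (Finset.mem_univ _)) u0 rfl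
        (fun v e => hc (by simp : (completeBipartiteGraph (Fin r) (Fin s)).Adj (Sum.inl u0) (Sum.inr v)) e.symm)
        ⟨v0, hlt⟩
      refine ⟨D'.map (Equiv.sumComm (Fin s) (Fin r)).toEmbedding, ⟨?_, ?_⟩, ?_⟩
      · intro v hv
        have hv' : (Equiv.sumComm (Fin s) (Fin r)).symm v ∉ D' := by
          intro hmem
          exact hv (Finset.mem_map.2 ⟨_, hmem, by simp⟩)
        obtain ⟨d, hd, hadj, hlt'⟩ := hD'.1 _ hv'
        refine ⟨(Equiv.sumComm (Fin s) (Fin r)) d, Finset.mem_map.2 ⟨d, hd, rfl⟩, ?_, ?_⟩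
        · rcases d with d | d <;> rcases v with v | v <;> simp_all
        · simpa using hlt'
      · intro d hd
        obtain ⟨d', hd', rfl⟩ := Finset.mem_map.1 hd
        simpa using hD'.2 d' hd'
      · rw [Finset.card_map]
        exact hcard.trans (by simp)
    · -- A > B
      obtain ⟨D, hD, hcard⟩ := exists_ucdom (α := Fin r) (β := Fin s) c
        B (fun v => hv0 v (Finset.mem_univ _)) v0 rfl
        (fun u e => hc (by simp : (completeBipartiteGraph (Fin r) (Fin s)).Adj (Sum.inl u) (Sum.inr v0)) e)
        ⟨u0, hgt⟩
      exact ⟨D, hD, hcard.trans (by simp)⟩
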